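/- Let (η_i) be a real sequence with η_i → 1/2 as i → ∞, and define h_k = ∑_{i=3}^{k−1} (−1)^{k−i+1} η_i η_{i+1} ⋯ η_{k−1} for k ≥ 3 (with h_3 interpreted via the empty-sum convention as 0 when the range is empty). Then lim_{k→∞} h_k = 1/3. -/

import Mathlib

open Filter

/-- Contraction-type sequences tend to zero. -/
lemma aux_contract_tendsto (a c : ℕ → ℝ) (r : ℝ) (hr0 : 0 ≤ r) (hr1 : r < 1)
    (hc : Tendsto c atTop (nhds 0))
    (hrec : ∀ᶠ n in atTop, |a (n + 1)| ≤ r * |a n| + c n) :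
    Tendsto a atTop (nhds 0) := by
  rw [Metric.tendsto_atTop]
  intro ε hε
  have hr1' : (0:ℝ) < 1 - r := by linarith
  have hq : (0:ℝ) < (1 - r) * ε / 4 := by positivity
  have hcs : ∀ᶠ n in atTop, c n ≤ (1 - r) * ε / 4 := by
    have := Metric.tendsto_atTop.mp hc _ hq
    obtain ⟨N, hN⟩ := this
    exact eventually_atTop.mpr ⟨N, fun n hn => by
      have := hN n hn
      rw [Real.dist_eq, sub_zero] at this
      exact (le_abs_self _).trans this.le⟩
  obtain ⟨N, hN⟩ := eventually_atTop.mp (hrec.and hcs)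
  -- inductive estimate
  have key : ∀ m, |a (N + m)| ≤ r ^ m * |a N| + ε / 4 := by
    intro m
    induction m with
    | zero => simp; nlinarith
    | succ m ih =>
        have h1 := (hN (N + m) (Nat.le_add_right _ _)).1
        have h2 := (hN (N + m) (Nat.le_add_right _ _)).2
        have : |a (N + m + 1)| ≤ r * (r ^ m * |a N| + ε / 4) + (1 - r) * ε / 4 := by
          calc |a (N + m + 1)| ≤ r * |a (N + m)| + c (N + m) := h1
            _ ≤ r * (r ^ m * |a N| + ε / 4) + (1 - r) * ε / 4 := by
                have := mul_le_mul_of_nonneg_left ih hr0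
                linarith
        have heq : N + (m + 1) = N + m + 1 := by ring
        rw [heq]
        calc |a (N + m + 1)| ≤ r * (r ^ m * |a N| + ε / 4) + (1 - r) * ε / 4 := this
          _ = r ^ (m + 1) * |a N| + (r * ε / 4 + (1 - r) * ε / 4) := by ring
          _ ≤ r ^ (m + 1) * |a N| + ε / 4 := by nlinarith
  have hpow : Tendsto (fun m => r ^ m * |a N|) atTop (nhds 0) := by
    have := tendsto_pow_atTop_nhds_zero_of_lt_one hr0 hr1
    simpa using this.mul_const |a N|
  obtain ⟨M, hM⟩ := Metric.tendsto_atTop.mp hpow (ε / 2) (by linarith)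
  refine ⟨N + M, fun n hn => ?_⟩
  have hm : M ≤ n - N := by omega
  have hn' : n = N + (n - N) := by omega
  have h1 := key (n - N)
  have h2 : r ^ (n - N) * |a N| ≤ r ^ M * |a N| := by
    apply mul_le_mul_of_nonneg_right _ (abs_nonneg _)
    exact pow_le_pow_of_le_one hr0 hr1.le hm
  have h3 := hM M le_rfl
  rw [Real.dist_eq, sub_zero] at h3
  have h3' : r ^ M * |a N| < ε / 2 := lt_of_abs_lt h3
  rw [Real.dist_eq, sub_zero]
  calc |a n| = |a (N + (n - N))| := by rw [← hn']
    _ ≤ r ^ (n - N) * |a N| + ε / 4 := h1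
    _ ≤ r ^ M * |a N| + ε / 4 := by linarith
    _ < ε := by linarith

lemma aux_recursion (η : ℕ → ℝ) (m : ℕ) (hm : 2 ≤ m) :
    ∑ i ∈ Finset.Icc 3 (m + 1), (-1:ℝ) ^ (m + 1 + 1 - i + 1) * ∏ j ∈ Finset.Icc i (m + 1), η j
      = η (m + 1) * (1 - ∑ i ∈ Finset.Icc 3 m, (-1:ℝ) ^ (m + 1 - i + 1) * ∏ j ∈ Finset.Icc i m, η j) := by
  rw [Finset.sum_Icc_succ_top (by omega : 3 ≤ m + 1)]
  have htop : (-1:ℝ) ^ (m + 1 + 1 - (m + 1) + 1) * ∏ j ∈ Finset.Icc (m + 1) (m + 1), η j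
      = η (m + 1) := by
    simp only [Finset.Icc_self, Finset.prod_singleton]
    have : m + 1 + 1 - (m + 1) + 1 = 2 := by omega
    rw [this]; ring
  rw [htop]
  have hterm : ∀ i ∈ Finset.Icc 3 m,
      (-1:ℝ) ^ (m + 1 + 1 - i + 1) * ∏ j ∈ Finset.Icc i (m + 1), η j
        = -(η (m + 1) * ((-1:ℝ) ^ (m + 1 - i + 1) * ∏ j ∈ Finset.Icc i m, η j)) := by
    intro i hi
    have hi' : i ≤ m := (Finset.mem_Icc.mp hi).2
    rw [Finset.prod_Icc_succ_top (by omega : i ≤ m + 1)]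
    have hexp : m + 1 + 1 - i + 1 = (m + 1 - i + 1) + 1 := by omega
    rw [hexp, pow_succ]
    ring
  rw [Finset.sum_congr rfl hterm]
  rw [Finset.sum_neg_distrib, ← Finset.mul_sum]
  ring

theorem alternating_product_sum_limit (η : ℕ → ℝ) (hη : Tendsto η atTop (nhds (1/2))) :
    Tendsto (fun k => ∑ i ∈ Finset.Icc 3 (k-1),
        (-1 : ℝ) ^ (k - i + 1) * ∏ j ∈ Finset.Icc i (k-1), η j)
      atTop (nhds (1/3)) := by
  set S : ℕ → ℝ := fun k => ∑ i ∈ Finset.Icc 3 (k-1),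
      (-1 : ℝ) ^ (k - i + 1) * ∏ j ∈ Finset.Icc i (k-1), η j with hS
  have hrec : ∀ k, 3 ≤ k → S (k + 1) = η k * (1 - S k) := by
    intro k hk
    obtain ⟨m, rfl⟩ : ∃ m, k = m + 1 := ⟨k - 1, by omega⟩
    have hm : 2 ≤ m := by omega
    simp only [hS, Nat.add_sub_cancel]
    exact aux_recursion η m hm
  -- error sequence
  set a : ℕ → ℝ := fun k => S k - 1/3 with ha
  set c : ℕ → ℝ := fun k => (2/3) * |η k - 1/2| with hc
  have hc0 : Tendsto c atTop (nhds 0) := by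
    have h1 : Tendsto (fun k => η k - 1/2) atTop (nhds 0) := by
      simpa using hη.sub_const (1/2)
    have h2 : Tendsto (fun k => |η k - 1/2|) atTop (nhds 0) := by
      simpa using h1.abs
    have h3 := h2.const_mul (2/3 : ℝ)
    simp only [mul_zero] at h3
    simpa [hc, one_div] using h3
  have hbound : ∀ᶠ k in atTop, |η k| ≤ 3/5 := by
    have h1 : ∀ᶠ k in atTop, |η k - 1/2| < 1/10 := by
      have := Metric.tendsto_atTop.mp hη (1/10) (by norm_num)
      obtain ⟨N, hN⟩ := this
      exact eventually_atTop.mpr ⟨N, fun n hn => by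
        have := hN n hn; rwa [Real.dist_eq] at this⟩
    filter_upwards [h1] with k hk
    have := abs_sub_abs_le_abs_sub (η k) (1/2 : ℝ)
    have h12 : |(1/2 : ℝ)| = 1/2 := by norm_num
    linarith [abs_nonneg (η k)]
  have hrec' : ∀ᶠ n in atTop, |a (n + 1)| ≤ (3/5) * |a n| + c n := by
    filter_upwards [hbound, eventually_ge_atTop 3] with k hbk hk3
    have heq : a (k + 1) = (2/3) * (η k - 1/2) - η k * a k := by
      simp only [ha]
      rw [hrec k hk3]
      ring
    rw [heq]
    calc |(2/3) * (η k - 1/2) - η k * a k|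
        ≤ |(2/3) * (η k - 1/2)| + |η k * a k| := abs_sub _ _
      _ = (2/3) * |η k - 1/2| + |η k| * |a k| := by
          rw [abs_mul, abs_mul]; norm_num
      _ ≤ (3/5) * |a k| + c k := by
          have := mul_le_mul_of_nonneg_right hbk (abs_nonneg (a k))
          simp only [hc]
          linarith
  have ha0 : Tendsto a atTop (nhds 0) :=
    aux_contract_tendsto a c (3/5) (by norm_num) (by norm_num) hc0 hrec'
  have : Tendsto (fun k => a k + 1/3) atTop (nhds (0 + 1/3)) :=
    ha0.add_const (1/3)
  simpa [ha] using this
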